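/- Let M be a Cartesian cohomology functor for (G, Σ) with coefficients in A and let τ ∈ Σ⁻¹. For an open compact subgroup V ⊆ Σ with τ⁻¹Vτ ⊆ Σ, set W = V ∩ τVτ⁻¹ and define the Hecke operator T_V : M(V) → M(V) as the composite pr_{τ⁻¹Wτ, V, ⋆} ∘ [τ]_{W, τ⁻¹Wτ, ⋆} ∘ pr^⋆_{W, V}. Suppose V' ⊆ V are two such open compact subgroups, set W' = V' ∩ τV'τ⁻¹, and suppose there exists a finite set R ⊆ V' which is simultaneously a set of representatives for both coset spaces: V = ⨆_{x ∈ R} W x and V' = ⨆_{x ∈ R} W' x. Then pr_{V', V, ⋆} ∘ T_{V'} = T_V ∘ pr_{V', V, ⋆} as maps M(V') → M(V). -/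

import Mathlib

/-- The conjugate subgroup `γ U γ⁻¹`. -/
def conjSub {G : Type*} [Group G] (γ : G) (U : Subgroup G) : Subgroup G :=
  U.map (MulAut.conj γ).toMonoidHom

/-- A *cohomology functor* for a group `G`, with objects the subgroups satisfying the
predicate `P` (in practice: the open compact subgroups contained in an open submonoid `Σ`),
monoid of admissible twists `S` (in practice `Σ`), and coefficients in a commutative
ring `A`.  It consists of `A`-modules `M U`, contravariant pullback maps
`pull g U V : M V →ₗ M U` (for the morphism `[g] : U → V` of `𝒫(G, Σ)`, i.e. `g ∈ S` and
`g⁻¹ U g ⊆ V`) and covariant pushforward maps `push g U V : M U →ₗ M V` (for the morphism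
`[g] : U → V` of `𝒫(G, Σ⁻¹)`, i.e. `g⁻¹ ∈ S` and `g⁻¹ U g ⊆ V`), which are functorial,
depend only on the double coset `U g V`, and satisfy `[g]^⋆ = [g⁻¹]_⋆` when
`g⁻¹ U g = V`. -/
structure CohFunctor (G : Type*) [Group G] (P : Subgroup G → Prop) (S : Set G)
    (A : Type*) [CommRing A] where
  M : Subgroup G → Type*
  addCommGroup : ∀ U, AddCommGroup (M U)
  module : ∀ U, Module A (M U)
  pull : ∀ (g : G) (U V : Subgroup G), M V →ₗ[A] M U
  push : ∀ (g : G) (U V : Subgroup G), M U →ₗ[A] M V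
  pull_id : ∀ U, P U → pull 1 U U = LinearMap.id
  push_id : ∀ U, P U → push 1 U U = LinearMap.id
  pull_comp : ∀ (g h : G) (U V W : Subgroup G), P U → P V → P W →
    g ∈ S → h ∈ S → (∀ x ∈ U, g⁻¹ * x * g ∈ V) → (∀ x ∈ V, h⁻¹ * x * h ∈ W) →
    (pull g U V).comp (pull h V W) = pull (g * h) U W
  push_comp : ∀ (g h : G) (U V W : Subgroup G), P U → P V → P W →
    g⁻¹ ∈ S → h⁻¹ ∈ S → (∀ x ∈ U, g⁻¹ * x * g ∈ V) → (∀ x ∈ V, h⁻¹ * x * h ∈ W) →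
    (push h V W).comp (push g U V) = push (g * h) U W
  pull_congr : ∀ (g u v : G) (U V : Subgroup G), P U → P V → g ∈ S →
    (∀ x ∈ U, g⁻¹ * x * g ∈ V) → u ∈ U → v ∈ V → pull (u * g * v) U V = pull g U V
  push_congr : ∀ (g u v : G) (U V : Subgroup G), P U → P V → g⁻¹ ∈ S →
    (∀ x ∈ U, g⁻¹ * x * g ∈ V) → u ∈ U → v ∈ V → push (u * g * v) U V = push g U V
  pull_eq_push : ∀ (g : G) (U V : Subgroup G), P U → P V → g ∈ S →
    conjSub g⁻¹ U = V → pull g U V = push g⁻¹ V U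

attribute [instance] CohFunctor.addCommGroup CohFunctor.module

namespace CohFunctor

variable {G : Type*} [Group G] {P : Subgroup G → Prop} {S : Set G}
  {A : Type*} [CommRing A]

/-- The Cartesian (Mackey) condition: for objects `U, U' ≤ V` and any finite set `R` of
representatives of the double cosets `U\V/U'`, the composite `pr^⋆_{U,V} ∘ pr_{U',V,⋆}`
equals the sum over `γ ∈ R` of `pr_{U_γ,U,⋆} ∘ [γ]^⋆` with `U_γ = γU'γ⁻¹ ∩ U`. -/
def IsCartesian (F : CohFunctor G P S A) : Prop :=
  ∀ (U U' V : Subgroup G), P U → P U' → P V → U ≤ V → U' ≤ V →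
    ∀ R : Finset G, (↑R : Set G) ⊆ (V : Set G) →
      (∀ v ∈ V, ∃ γ ∈ R, ∃ x ∈ U, ∃ y ∈ U', v = x * γ * y) →
      (∀ γ ∈ R, ∀ γ' ∈ R, (∃ x ∈ U, ∃ y ∈ U', γ' = x * γ * y) → γ = γ') →
      (F.pull 1 U V).comp (F.push 1 U' V) =
        ∑ γ ∈ R, (F.push 1 (conjSub γ U' ⊓ U) U).comp (F.pull γ (conjSub γ U' ⊓ U) U')

/-- The Iwasawa completion `M_Iw(K) = lim_U M(U)`, the inverse limit over the objects `U`
containing the compact subgroup `K`, with respect to the pushforward maps `pr_⋆`. -/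
def Iw (F : CohFunctor G P S A) (K : Subgroup G) :
    Submodule A (∀ U : {U : Subgroup G // P U ∧ K ≤ U}, F.M U.1) where
  carrier := {f | ∀ (U V : {U : Subgroup G // P U ∧ K ≤ U}), U.1 ≤ V.1 →
      F.push 1 U.1 V.1 (f U) = f V}
  add_mem' := by
    intro f g hf hg U V h
    simp only [Pi.add_apply, map_add, hf U V h, hg U V h]
  zero_mem' := by
    intro U V h
    simp
  smul_mem' := by
    intro c f hf U V h
    simp only [Pi.smul_apply, map_smul, hf U V h]

/-- Projection from the Iwasawa completion at `K` to the value at an object `U ⊇ K`. -/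
def IwProj (F : CohFunctor G P S A) (K U : Subgroup G) (hU : P U) (hKU : K ≤ U) :
    F.Iw K →ₗ[A] F.M U :=
  (LinearMap.proj (⟨U, hU, hKU⟩ : {U : Subgroup G // P U ∧ K ≤ U})).comp (F.Iw K).subtype

/-- The pushforward `pr_⋆ : M_Iw(K₁) → M_Iw(K₂)` on Iwasawa completions, for compact
subgroups `K₁ ≤ K₂` (restriction of compatible families). -/
def IwRes (F : CohFunctor G P S A) (K₁ K₂ : Subgroup G) (h : K₁ ≤ K₂) :
    F.Iw K₁ →ₗ[A] F.Iw K₂ where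
  toFun f := ⟨fun U => f.1 ⟨U.1, U.2.1, le_trans h U.2.2⟩, fun U V hUV =>
    f.2 ⟨U.1, U.2.1, le_trans h U.2.2⟩ ⟨V.1, V.2.1, le_trans h V.2.2⟩ hUV⟩
  map_add' f g := rfl
  map_smul' c f := rfl

end CohFunctor

section Aux

variable {G : Type*} [Group G]

theorem mem_conjSub {γ x : G} {U : Subgroup G} :
    x ∈ conjSub γ U ↔ γ⁻¹ * x * γ ∈ U := by
  simp only [conjSub, Subgroup.mem_map, MulEquiv.coe_toMonoidHom, MulAut.conj_apply]
  constructor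
  · rintro ⟨u, hu, rfl⟩
    have h : γ⁻¹ * (γ * u * γ⁻¹) * γ = u := by group
    rwa [h]
  · intro h
    exact ⟨γ⁻¹ * x * γ, h, by group⟩

theorem conjSub_one (U : Subgroup G) : conjSub 1 U = U := by
  ext x; simp [mem_conjSub]

theorem conjSub_mono {γ : G} {U U' : Subgroup G} (h : U ≤ U') :
    conjSub γ U ≤ conjSub γ U' := fun x hx => mem_conjSub.2 (h (mem_conjSub.1 hx))

theorem conjSub_coe (γ : G) (U : Subgroup G) :
    (conjSub γ U : Set G) = (fun x => γ⁻¹ * x * γ) ⁻¹' (U : Set G) := by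
  ext x; exact mem_conjSub

theorem conjSub_coe_image (γ : G) (U : Subgroup G) :
    (conjSub γ U : Set G) = (fun x => γ * x * γ⁻¹) '' (U : Set G) := by
  ext x
  simp only [Set.mem_image, SetLike.mem_coe, mem_conjSub]
  constructor
  · intro h
    exact ⟨γ⁻¹ * x * γ, h, by group⟩
  · rintro ⟨u, hu, rfl⟩
    have h : γ⁻¹ * (γ * u * γ⁻¹) * γ = u := by group
    rwa [h]

end Aux

namespace CohFunctor

/-- Abstract form of Statement 7, with the group-theoretic input already digested. -/
theorem stmt7_aux {G : Type*} [Group G] {P : Subgroup G → Prop} {S : Set G}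
    {A : Type*} [CommRing A] (F : CohFunctor G P S A)
    (τ : G) (V V' W W' Wτ W'τ : Subgroup G)
    (PV : P V) (PV' : P V') (PW : P W) (PW' : P W') (PWτ : P Wτ) (PW'τ : P W'τ)
    (hτS : τ⁻¹ ∈ S) (h1S : (1 : G) ∈ S)
    (memτW : ∀ x ∈ W, τ⁻¹ * x * τ ∈ Wτ)
    (memWτV : ∀ x ∈ Wτ, (1:G)⁻¹ * x * 1 ∈ V)
    (memτW' : ∀ x ∈ W', τ⁻¹ * x * τ ∈ W'τ)
    (memW'τV' : ∀ x ∈ W'τ, (1:G)⁻¹ * x * 1 ∈ V')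
    (memτW'V' : ∀ x ∈ W', τ⁻¹ * x * τ ∈ V')
    (memτWV : ∀ x ∈ W, τ⁻¹ * x * τ ∈ V)
    (memW'W : ∀ x ∈ W', (1:G)⁻¹ * x * 1 ∈ W)
    (memV'V : ∀ x ∈ V', (1:G)⁻¹ * x * 1 ∈ V)
    (hcart : (F.pull 1 W V).comp (F.push 1 V' V)
      = (F.push 1 W' W).comp (F.pull 1 W' V')) :
    (F.push 1 V' V).comp ((F.push 1 W'τ V').comp
        ((F.push τ W' W'τ).comp (F.pull 1 W' V')))
      = ((F.push 1 Wτ V).comp ((F.push τ W Wτ).comp (F.pull 1 W V))).comp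
          (F.push 1 V' V) := by
  have h1S' : (1 : G)⁻¹ ∈ S := by simpa using h1S
  have e1' : (F.push 1 W'τ V').comp (F.push τ W' W'τ) = F.push τ W' V' := by
    have := F.push_comp τ 1 W' W'τ V' PW' PW'τ PV' hτS h1S' memτW' memW'τV'
    simpa using this
  have e2 : (F.push 1 V' V).comp (F.push τ W' V') = F.push τ W' V := by
    have := F.push_comp τ 1 W' V' V PW' PV' PV hτS h1S' memτW'V' memV'V
    simpa using this
  have e1 : (F.push 1 Wτ V).comp (F.push τ W Wτ) = F.push τ W V := by
    have := F.push_comp τ 1 W Wτ V PW PWτ PV hτS h1S' memτW memWτV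
    simpa using this
  have e4 : (F.push τ W V).comp (F.push 1 W' W) = F.push τ W' V := by
    have := F.push_comp 1 τ W' W V PW' PW PV h1S' hτS memW'W memτWV
    simpa using this
  ext m
  simp only [LinearMap.comp_apply]
  have f1' := DFunLike.congr_fun e1' (F.pull 1 W' V' m)
  have f2 := DFunLike.congr_fun e2 (F.pull 1 W' V' m)
  have hc := DFunLike.congr_fun hcart m
  have f1 := DFunLike.congr_fun e1 ((F.push 1 W' W) (F.pull 1 W' V' m))
  have f4 := DFunLike.congr_fun e4 (F.pull 1 W' V' m)
  simp only [LinearMap.comp_apply] at f1' f2 hc f1 f4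
  rw [f1', f2, hc, f1, f4]

end CohFunctor

/-- The Hecke operator `T_V = pr_{τ⁻¹Wτ, V, ⋆} ∘ [τ]_{W, τ⁻¹Wτ, ⋆} ∘ pr^⋆_{W, V}` on
`M(V)`, where `W = V ∩ τVτ⁻¹`; it is the operator of the double coset `V τ⁻¹ V`. -/
def heckeT {G : Type*} [Group G] {P : Subgroup G → Prop} {S : Set G}
    {A : Type*} [CommRing A] (F : CohFunctor G P S A) (τ : G) (V : Subgroup G) :
    F.M V →ₗ[A] F.M V :=
  (F.push 1 (conjSub τ⁻¹ (V ⊓ conjSub τ V)) V).comp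
    ((F.push τ (V ⊓ conjSub τ V) (conjSub τ⁻¹ (V ⊓ conjSub τ V))).comp
      (F.pull 1 (V ⊓ conjSub τ V) V))

/-- Let `M` be a Cartesian cohomology functor for `(G, Σ)` and `τ ∈ Σ⁻¹`.
If `V' ⊆ V` are open compact subgroups contained in `Σ` with `τ⁻¹Vτ ⊆ Σ`, `τ⁻¹V'τ ⊆ Σ`,
and some finite `R ⊆ V'` is simultaneously a set of coset representatives for `W\V` and
`W'\V'` (where `W = V ∩ τVτ⁻¹`, `W' = V' ∩ τV'τ⁻¹`), then the Hecke operators `T_V`,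
`T_{V'}` are compatible under the pushforward `pr_{V',V,⋆}`. -/
theorem stmt_7 {G : Type*} [Group G] [TopologicalSpace G] [IsTopologicalGroup G]
    {A : Type*} [CommRing A]
    (Sig : Submonoid G) (hSig : IsOpen (Sig : Set G))
    (F : CohFunctor G
      (fun U => IsOpen (U : Set G) ∧ IsCompact (U : Set G) ∧ (U : Set G) ⊆ (Sig : Set G))
      (Sig : Set G) A)
    (hF : F.IsCartesian)
    (τ : G) (hτ : τ⁻¹ ∈ Sig)
    (V V' : Subgroup G)
    (hV : IsOpen (V : Set G) ∧ IsCompact (V : Set G) ∧ (V : Set G) ⊆ (Sig : Set G))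
    (hV' : IsOpen (V' : Set G) ∧ IsCompact (V' : Set G) ∧ (V' : Set G) ⊆ (Sig : Set G))
    (hVτ : ((conjSub τ⁻¹ V : Subgroup G) : Set G) ⊆ (Sig : Set G))
    (hV'τ : ((conjSub τ⁻¹ V' : Subgroup G) : Set G) ⊆ (Sig : Set G))
    (hle : V' ≤ V)
    (R : Finset G) (hR : (↑R : Set G) ⊆ (V' : Set G))
    (hRV : ∀ v ∈ V, ∃! x, x ∈ R ∧ v * x⁻¹ ∈ V ⊓ conjSub τ V)
    (hRV' : ∀ v ∈ V', ∃! x, x ∈ R ∧ v * x⁻¹ ∈ V' ⊓ conjSub τ V') :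
    (F.push 1 V' V).comp (heckeT F τ V') = (heckeT F τ V).comp (F.push 1 V' V) := by
  classical
  -- notation
  set W : Subgroup G := V ⊓ conjSub τ V with hWdef
  set W' : Subgroup G := V' ⊓ conjSub τ V' with hW'def
  have hτττ : ∀ x : G, τ⁻¹ * (τ * x * τ⁻¹) * τ = x := fun x => by group
  have hWleV : W ≤ V := inf_le_left
  have hW'leV' : W' ≤ V' := inf_le_left
  have hW'leW : W' ≤ W := inf_le_inf hle (conjSub_mono hle)
  -- key group-theoretic fact: V' ⊓ W = W'
  have key : V' ⊓ W = W' := by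
    apply le_antisymm
    · intro w hw
      obtain ⟨x₁, ⟨hx₁R, hx₁W'⟩, _⟩ := hRV' 1 V'.one_mem
      have hx₁mem : x₁ ∈ W' := by
        have : x₁⁻¹ ∈ W' := by simpa using hx₁W'
        simpa using W'.inv_mem this
      obtain ⟨x, ⟨hxR, hxW'⟩, _⟩ := hRV' w hw.1
      obtain ⟨y, _, hyuniq⟩ := hRV w (hle hw.1)
      have hx : x = y := hyuniq x ⟨hxR, hW'leW hxW'⟩
      have hx₁ : x₁ = y := hyuniq x₁ ⟨hx₁R, W.mul_mem hw.2 (W.inv_mem (hW'leW hx₁mem))⟩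
      have hxW : x ∈ W' := by rw [hx, ← hx₁]; exact hx₁mem
      have : (w * x⁻¹) * x ∈ W' := W'.mul_mem hxW' hxW
      simpa using this
    · exact le_inf hW'leV' hW'leW
  -- P facts
  have hopen_conj : ∀ (γ : G) (U : Subgroup G), IsOpen (U : Set G) →
      IsOpen ((conjSub γ U : Subgroup G) : Set G) := by
    intro γ U hU
    rw [conjSub_coe]
    exact hU.preimage (by continuity)
  have hcompact_conj : ∀ (γ : G) (U : Subgroup G), IsCompact (U : Set G) →
      IsCompact ((conjSub γ U : Subgroup G) : Set G) := by
    intro γ U hU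
    rw [conjSub_coe_image]
    exact hU.image (by continuity)
  have hPW : IsOpen (W : Set G) ∧ IsCompact (W : Set G) ∧ (W : Set G) ⊆ (Sig : Set G) := by
    have hopen : IsOpen (W : Set G) := by
      rw [hWdef, Subgroup.coe_inf]
      exact hV.1.inter (hopen_conj τ V hV.1)
    refine ⟨hopen, ?_, fun x hx => hV.2.2 (hWleV hx)⟩
    exact hV.2.1.of_isClosed_subset (W.isClosed_of_isOpen hopen) (fun x hx => hWleV hx)
  have hPW' : IsOpen (W' : Set G) ∧ IsCompact (W' : Set G) ∧ (W' : Set G) ⊆ (Sig : Set G) := by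
    have hopen : IsOpen (W' : Set G) := by
      rw [hW'def, Subgroup.coe_inf]
      exact hV'.1.inter (hopen_conj τ V' hV'.1)
    refine ⟨hopen, ?_, fun x hx => hV'.2.2 (hW'leV' hx)⟩
    exact hV'.2.1.of_isClosed_subset (W'.isClosed_of_isOpen hopen) (fun x hx => hW'leV' hx)
  have hPconj : ∀ (U Big : Subgroup G), U ≤ Big →
      (IsOpen (U : Set G) ∧ IsCompact (U : Set G) ∧ (U : Set G) ⊆ (Sig : Set G)) →
      ((conjSub τ⁻¹ Big : Subgroup G) : Set G) ⊆ (Sig : Set G) →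
      (IsOpen ((conjSub τ⁻¹ U : Subgroup G) : Set G) ∧
        IsCompact ((conjSub τ⁻¹ U : Subgroup G) : Set G) ∧
        ((conjSub τ⁻¹ U : Subgroup G) : Set G) ⊆ (Sig : Set G)) := by
    intro U Big hUB hPU hBig
    exact ⟨hopen_conj τ⁻¹ U hPU.1, hcompact_conj τ⁻¹ U hPU.2.1,
      fun x hx => hBig (conjSub_mono hUB hx)⟩
  have hPWτ := hPconj W V hWleV hPW hVτ
  have hPW'τ := hPconj W' V' hW'leV' hPW' hV'τ
  -- membership conditions
  have hτττ' : ∀ x : G, τ * (τ⁻¹ * x * τ) * τ⁻¹ = x := fun x => by group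
  have memτW : ∀ x ∈ W, τ⁻¹ * x * τ ∈ conjSub τ⁻¹ W := by
    intro x hx
    rw [mem_conjSub, inv_inv, hτττ']
    exact hx
  have memτW' : ∀ x ∈ W', τ⁻¹ * x * τ ∈ conjSub τ⁻¹ W' := by
    intro x hx
    rw [mem_conjSub, inv_inv, hτττ']
    exact hx
  have memconjV : ∀ (U : Subgroup G), ∀ x ∈ conjSub τ⁻¹ (U ⊓ conjSub τ U), x ∈ U := by
    intro U x hx
    rw [mem_conjSub, inv_inv] at hx
    have h2 : τ * x * τ⁻¹ ∈ conjSub τ U := (Subgroup.mem_inf.1 hx).2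
    rw [mem_conjSub] at h2
    rwa [hτττ] at h2
  have memWτV : ∀ x ∈ conjSub τ⁻¹ W, (1:G)⁻¹ * x * 1 ∈ V := by
    intro x hx
    simpa using memconjV V x hx
  have memW'τV' : ∀ x ∈ conjSub τ⁻¹ W', (1:G)⁻¹ * x * 1 ∈ V' := by
    intro x hx
    simpa using memconjV V' x hx
  have memτW'V' : ∀ x ∈ W', τ⁻¹ * x * τ ∈ V' := fun x hx => memconjV V' _ (memτW' x hx)
  have memτWV : ∀ x ∈ W, τ⁻¹ * x * τ ∈ V := fun x hx => memconjV V _ (memτW x hx)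
  have memW'W : ∀ x ∈ W', (1:G)⁻¹ * x * 1 ∈ W := by
    intro x hx; simpa using hW'leW hx
  have memV'V : ∀ x ∈ V', (1:G)⁻¹ * x * 1 ∈ V := by
    intro x hx; simpa using hle hx
  -- the Cartesian property with R = {1}
  have hcart : (F.pull 1 W V).comp (F.push 1 V' V)
      = (F.push 1 W' W).comp (F.pull 1 W' V') := by
    have hcover : ∀ v ∈ V, ∃ γ ∈ ({1} : Finset G), ∃ x ∈ W, ∃ y ∈ V', v = x * γ * y := by
      intro v hv
      obtain ⟨r, ⟨hrR, hrW⟩, _⟩ := hRV v hv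
      refine ⟨1, Finset.mem_singleton_self 1, v * r⁻¹, hrW, r, hR hrR, by group⟩
    have huniq : ∀ γ ∈ ({1} : Finset G), ∀ γ' ∈ ({1} : Finset G),
        (∃ x ∈ W, ∃ y ∈ V', γ' = x * γ * y) → γ = γ' := by
      intro γ hγ γ' hγ' _
      rw [Finset.mem_singleton] at hγ hγ'
      rw [hγ, hγ']
    have hsub : (↑({1} : Finset G) : Set G) ⊆ (V : Set G) := by
      intro x hx
      simp only [Finset.coe_singleton, Set.mem_singleton_iff] at hx
      rw [hx]; exact V.one_mem
    have := hF W V' V hPW hV' hV hWleV hle ({1} : Finset G) hsub hcover huniq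
    rw [Finset.sum_singleton] at this
    rw [this, conjSub_one, key]
  exact F.stmt7_aux τ V V' W W' (conjSub τ⁻¹ W) (conjSub τ⁻¹ W') hV hV' hPW hPW' hPWτ hPW'τ
    hτ Sig.one_mem memτW memWτV memτW' memW'τV' memτW'V' memτWV memW'W memV'V hcart
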